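/- For r ≥ 2 and m ≥ r·(1 + ln r), the Stirling partition number satisfies S(m,r) > (1/4)·r^(m-r+2). -/

import Mathlib

/-- Stirling number of the second kind: number of partitions of an `n`-set into
`k` nonempty blocks. -/
def stirling : ℕ → ℕ → ℕ
  | 0, 0 => 1
  | 0, _ + 1 => 0
  | _ + 1, 0 => 0
  | n + 1, k + 1 => stirling n k + (k + 1) * stirling n (k + 1)

open Finset in
/-- The alternating (inclusion-exclusion) sum counting surjections. -/
noncomputable def altA (m r : ℕ) : ℝ :=
  ∑ i ∈ Finset.range (r + 1), (-1 : ℝ) ^ i * (r.choose i) * ((r : ℝ) - i) ^ m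

open Finset in
lemma altA_rec (m r : ℕ) :
    altA (m + 1) (r + 1) = (r + 1) * (altA m r + altA m (r + 1)) := by
  have step1 : altA (m + 1) (r + 1) =
      (r + 1) * ∑ i ∈ range (r + 2), (-1 : ℝ) ^ i * (r.choose i) * (((r : ℝ) + 1) - i) ^ m := by
    unfold altA
    rw [Finset.mul_sum]
    apply Finset.sum_congr
    · norm_num
    intro i hi
    have hi' : i ≤ r + 1 := by
      have := Finset.mem_range.mp hi; omega
    have hnat : (r + 1).choose i * (r + 1 - i) = (r + 1) * r.choose i := by
      have h1 := Nat.choose_succ_right_eq (r + 1) i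
      have h2 := Nat.add_one_mul_choose_eq r i
      omega
    have hc : ((r + 1).choose i : ℝ) * (((r : ℝ) + 1) - i) = (r + 1) * (r.choose i) := by
      have : (((r : ℝ) + 1) - i) = ((r + 1 - i : ℕ) : ℝ) := by
        push_cast [Nat.cast_sub hi']; ring
      rw [this]
      exact_mod_cast congrArg (fun x : ℕ => (x : ℝ)) hnat
    have : (-1 : ℝ) ^ i * ((r + 1).choose i) * (((r : ℝ) + 1) - i) ^ (m + 1)
        = (-1 : ℝ) ^ i * (((r + 1).choose i : ℝ) * (((r : ℝ) + 1) - i)) * (((r : ℝ) + 1) - i) ^ m := by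
      rw [pow_succ]; ring
    push_cast at this hc ⊢
    rw [this, hc]; ring
  have hD : ∑ i ∈ range (r + 1), (-1 : ℝ) ^ i * (r.choose (i + 1)) * ((r : ℝ) - i) ^ m
      = ∑ i ∈ range r, (-1 : ℝ) ^ i * (r.choose (i + 1)) * ((r : ℝ) - i) ^ m := by
    rw [Finset.sum_range_succ, Nat.choose_succ_self]
    norm_num
  have hA : altA m (r + 1) = ((r : ℝ) + 1) ^ m - altA m r
      - ∑ i ∈ range (r + 1), (-1 : ℝ) ^ i * (r.choose (i + 1)) * ((r : ℝ) - i) ^ m := by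
    unfold altA
    rw [Finset.sum_range_succ']
    have hcong : ∀ i ∈ range (r + 1),
        (-1 : ℝ) ^ (i + 1) * (((r + 1).choose (i + 1) : ℕ) : ℝ) * (((r + 1 : ℕ) : ℝ) - ((i + 1 : ℕ) : ℝ)) ^ m
        = -((-1 : ℝ) ^ i * (r.choose i) * ((r : ℝ) - i) ^ m)
          + -((-1 : ℝ) ^ i * (r.choose (i + 1)) * ((r : ℝ) - i) ^ m) := by
      intro i _
      rw [Nat.choose_succ_succ]
      push_cast
      ring
    rw [Finset.sum_congr rfl hcong, Finset.sum_add_distrib, Finset.sum_neg_distrib,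
      Finset.sum_neg_distrib]
    simp only [Nat.choose_zero_right]
    push_cast
    ring
  have hC : ∑ i ∈ range (r + 1), (-1 : ℝ) ^ i * (r.choose i) * (((r : ℝ) + 1) - i) ^ m
      = ((r : ℝ) + 1) ^ m - ∑ i ∈ range r, (-1 : ℝ) ^ i * (r.choose (i + 1)) * ((r : ℝ) - i) ^ m := by
    rw [Finset.sum_range_succ']
    have hcong : ∀ i ∈ range r,
        (-1 : ℝ) ^ (i + 1) * ((r.choose (i + 1) : ℕ) : ℝ) * (((r : ℝ) + 1) - ((i + 1 : ℕ) : ℝ)) ^ m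
        = -((-1 : ℝ) ^ i * (r.choose (i + 1)) * ((r : ℝ) - i) ^ m) := by
      intro i _
      push_cast
      ring
    rw [Finset.sum_congr rfl hcong, Finset.sum_neg_distrib]
    simp only [Nat.choose_zero_right]
    push_cast
    ring
  have hsplit : ∑ i ∈ range (r + 2), (-1 : ℝ) ^ i * (r.choose i) * (((r : ℝ) + 1) - i) ^ m
      = ∑ i ∈ range (r + 1), (-1 : ℝ) ^ i * (r.choose i) * (((r : ℝ) + 1) - i) ^ m := by
    rw [Finset.sum_range_succ, Nat.choose_succ_self]
    norm_num
  rw [hD] at hA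
  have hfin : ((r : ℝ) + 1) ^ m - ∑ i ∈ range r, (-1 : ℝ) ^ i * (r.choose (i + 1)) * ((r : ℝ) - i) ^ m
      = altA m r + altA m (r + 1) := by linarith
  rw [step1, hsplit, hC, hfin]

open Finset in
lemma factorial_mul_stirling (m : ℕ) : ∀ r : ℕ,
    (r.factorial : ℝ) * stirling m r = altA m r := by
  induction m with
  | zero =>
    intro r
    cases r with
    | zero => simp [stirling, altA]
    | succ n =>
      have h := Int.alternating_sum_range_choose_of_ne (n := n + 1) (by omega)
      have h' : ∑ i ∈ range (n + 2), (-1 : ℝ) ^ i * ((n + 1).choose i) = 0 := by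
        have h2 := congrArg (fun z : ℤ => (z : ℝ)) h
        push_cast at h2
        simpa using h2
      have hz : altA 0 (n + 1) = 0 := by
        unfold altA
        rw [show (n + 1 + 1) = n + 2 from rfl]
        simpa [pow_zero, mul_one] using h'
      rw [hz]
      simp [stirling]
  | succ m ih =>
    intro r
    cases r with
    | zero => simp [stirling, altA]
    | succ n =>
      have hst : stirling (m + 1) (n + 1) = stirling m n + (n + 1) * stirling m (n + 1) := rfl
      rw [hst, altA_rec m n, ← ih n, ← ih (n + 1)]
      have hfact : ((n + 1).factorial : ℝ) = (n + 1) * (n.factorial : ℝ) := by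
        push_cast [Nat.factorial_succ]; ring
      rw [hfact]
      push_cast
      ring

open Finset in
lemma altSum_bounds : ∀ (n : ℕ) (f : ℕ → ℝ), (∀ i, 0 ≤ f i) → (∀ i, f (i + 1) ≤ f i) →
    0 ≤ ∑ i ∈ range n, (-1 : ℝ) ^ i * f i ∧ ∑ i ∈ range n, (-1 : ℝ) ^ i * f i ≤ f 0 := by
  intro n
  induction n with
  | zero => intro f h0 _; simpa using h0 0
  | succ n ih =>
    intro f h0 hf
    have key : ∑ i ∈ range (n + 1), (-1 : ℝ) ^ i * f i
        = f 0 - ∑ i ∈ range n, (-1 : ℝ) ^ i * f (i + 1) := by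
      rw [Finset.sum_range_succ']
      have hcong : ∀ i ∈ range n, (-1 : ℝ) ^ (i + 1) * f (i + 1)
          = -((-1 : ℝ) ^ i * f (i + 1)) := by intro i _; ring
      rw [Finset.sum_congr rfl hcong, Finset.sum_neg_distrib]
      ring
    obtain ⟨h1, h2⟩ := ih (fun i => f (i + 1)) (fun i => h0 _) (fun i => hf _)
    constructor
    · rw [key]; have := hf 0; linarith
    · rw [key]; linarith

open Finset in
lemma altSum_lb (n : ℕ) (f : ℕ → ℝ) (h0 : ∀ i, 0 ≤ f i) (hf : ∀ i, f (i + 1) ≤ f i) :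
    f 0 - f 1 ≤ ∑ i ∈ range (n + 1), (-1 : ℝ) ^ i * f i := by
  have key : ∑ i ∈ range (n + 1), (-1 : ℝ) ^ i * f i
      = f 0 - ∑ i ∈ range n, (-1 : ℝ) ^ i * f (i + 1) := by
    rw [Finset.sum_range_succ']
    have hcong : ∀ i ∈ range n, (-1 : ℝ) ^ (i + 1) * f (i + 1)
        = -((-1 : ℝ) ^ i * f (i + 1)) := by intro i _; ring
    rw [Finset.sum_congr rfl hcong, Finset.sum_neg_distrib]
    ring
  obtain ⟨h1, h2⟩ := altSum_bounds n (fun i => f (i + 1)) (fun i => h0 _) (fun i => hf _)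
  rw [key]
  simpa using by linarith

lemma key_exp (m s : ℕ) (hs : 2 ≤ s) (hm : (s : ℝ) * (1 + Real.log s) ≤ m) :
    (s : ℝ) * ((s : ℝ) - 1) ^ m ≤ (s : ℝ) ^ m / Real.exp 1 := by
  have hs0 : (0 : ℝ) < s := by positivity
  have h1 : ((s : ℝ) - 1) ≤ s * Real.exp (-(1 / s)) := by
    have := Real.add_one_le_exp (-(1 / (s : ℝ)))
    have h2 : (s : ℝ) * (-(1 / s) + 1) ≤ s * Real.exp (-(1 / s)) :=
      mul_le_mul_of_nonneg_left this (le_of_lt hs0)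
    calc ((s : ℝ) - 1) = s * (-(1 / s) + 1) := by field_simp; ring
      _ ≤ _ := h2
  have hb : (0 : ℝ) ≤ (s : ℝ) - 1 := by
    have : (2 : ℝ) ≤ s := by exact_mod_cast hs
    linarith
  have h2 : ((s : ℝ) - 1) ^ m ≤ ((s : ℝ) * Real.exp (-(1 / s))) ^ m :=
    pow_le_pow_left₀ hb h1 m
  have h3 : ((s : ℝ) * Real.exp (-(1 / s))) ^ m = (s : ℝ) ^ m * Real.exp (-(m / s)) := by
    rw [mul_pow, ← Real.exp_nat_mul]
    congr 1
    field_simp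
  have h4 : Real.exp (-((m : ℝ) / s)) ≤ Real.exp (-(1 + Real.log s)) := by
    apply Real.exp_le_exp.mpr
    have : (1 + Real.log s) ≤ (m : ℝ) / s := by
      rw [le_div_iff₀ hs0]
      calc (1 + Real.log s) * s = s * (1 + Real.log s) := by ring
        _ ≤ m := hm
    linarith
  have h5 : Real.exp (-(1 + Real.log s)) = 1 / (Real.exp 1 * s) := by
    rw [Real.exp_neg, Real.exp_add, Real.exp_log hs0, one_div]
  have hpow : (0 : ℝ) ≤ (s : ℝ) ^ m := by positivity
  calc (s : ℝ) * ((s : ℝ) - 1) ^ m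
      ≤ (s : ℝ) * ((s : ℝ) ^ m * Real.exp (-(m / s))) := by
        apply mul_le_mul_of_nonneg_left _ (le_of_lt hs0)
        rw [← h3]; exact h2
    _ ≤ (s : ℝ) * ((s : ℝ) ^ m * (1 / (Real.exp 1 * s))) := by
        apply mul_le_mul_of_nonneg_left _ (le_of_lt hs0)
        apply mul_le_mul_of_nonneg_left _ hpow
        rw [← h5]; exact h4
    _ = (s : ℝ) ^ m / Real.exp 1 := by
        rw [eq_div_iff (Real.exp_pos 1).ne']
        field_simp
  
lemma factorial_le (r : ℕ) (hr : 2 ≤ r) : r.factorial ≤ 2 * r ^ (r - 2) := by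
  induction r with
  | zero => omega
  | succ n ih =>
    rcases Nat.lt_or_ge n 2 with h | h
    · interval_cases n <;> simp [Nat.factorial]
    · have h1 := ih h
      have h2 : (n + 1).factorial = (n + 1) * n.factorial := rfl
      have h3 : (n + 1) * n.factorial ≤ (n + 1) * (2 * n ^ (n - 2)) :=
        Nat.mul_le_mul_left _ h1
      have h4 : (n + 1) * (2 * n ^ (n - 2)) ≤ 2 * (n + 1) ^ (n + 1 - 2) := by
        have h5 : n ^ (n - 2) ≤ (n + 1) ^ (n - 2) :=
          Nat.pow_le_pow_left (by omega) _
        have h6 : (n + 1) * (n + 1) ^ (n - 2) = (n + 1) ^ (n - 1) := by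
          rw [← pow_succ']
          congr 1
          omega
        calc (n + 1) * (2 * n ^ (n - 2)) = 2 * ((n + 1) * n ^ (n - 2)) := by ring
          _ ≤ 2 * ((n + 1) * (n + 1) ^ (n - 2)) := by
              exact Nat.mul_le_mul_left _ (Nat.mul_le_mul_left _ h5)
          _ = 2 * (n + 1) ^ (n - 1) := by rw [h6]
          _ = 2 * (n + 1) ^ (n + 1 - 2) := by rw [show n + 1 - 2 = n - 1 from by omega]
      omega

set_option maxHeartbeats 1000000 in
theorem stmt_6 (r m : ℕ) (hr : 2 ≤ r) (hm : (m : ℝ) ≥ r * (1 + Real.log r)) :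
    (stirling m r : ℝ) > (1 / 4) * (r : ℝ) ^ (m - r + 2) := by
  have hr0 : (0 : ℝ) < r := by positivity
  have hr2 : (2 : ℝ) ≤ r := by exact_mod_cast hr
  have hlogr : 0 ≤ Real.log r := Real.log_nonneg (by linarith)
  have hmr : r ≤ m := by
    have h1 : (r : ℝ) ≤ (m : ℝ) := by nlinarith
    exact_mod_cast h1
  have hm1 : 1 ≤ m := by omega
  -- the term sequence
  set f : ℕ → ℝ := fun i => (r.choose i : ℝ) * ((r : ℝ) - i) ^ m with hf_def
  have hf0 : ∀ i, 0 ≤ f i := by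
    intro i
    rcases Nat.lt_or_ge r i with h | h
    · simp [hf_def, Nat.choose_eq_zero_of_lt h]
    · have : (0 : ℝ) ≤ (r : ℝ) - i := by
        have : (i : ℝ) ≤ r := by exact_mod_cast h
        linarith
      positivity
  -- monotone (1+ln) bound transfer
  have hmono : ∀ s : ℕ, 2 ≤ s → s ≤ r → (s : ℝ) * (1 + Real.log s) ≤ m := by
    intro s hs hsr
    have hs0 : (0 : ℝ) < s := by positivity
    have hsr' : (s : ℝ) ≤ r := by exact_mod_cast hsr
    have hlog : Real.log s ≤ Real.log r := Real.log_le_log hs0 hsr'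
    have h1 : (1 : ℝ) + Real.log s ≤ 1 + Real.log r := by linarith
    have hpos : (0 : ℝ) ≤ 1 + Real.log s := by
      have h1s : (1 : ℝ) ≤ (s : ℝ) := by exact_mod_cast (by omega : 1 ≤ s)
      have : (0:ℝ) ≤ Real.log s := Real.log_nonneg h1s
      linarith
    calc (s : ℝ) * (1 + Real.log s) ≤ (r : ℝ) * (1 + Real.log r) :=
          mul_le_mul hsr' h1 hpos (le_of_lt hr0)
      _ ≤ m := hm
  have hfdec : ∀ i, f (i + 1) ≤ f i := by
    intro i
    rcases Nat.lt_or_ge i r with h | h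
    · -- i < r
      rcases Nat.lt_or_ge (i + 1) r with h2 | h2
      · -- i + 1 < r; set s := r - i ≥ 2
        set s : ℕ := r - i with hs_def
        have hs2 : 2 ≤ s := by omega
        have hsr : s ≤ r := by omega
        have hkey := key_exp m s hs2 (hmono s hs2 hsr)
        have hscast : ((s : ℕ) : ℝ) = (r : ℝ) - i := by
          rw [hs_def, Nat.cast_sub (le_of_lt h)]
        have hcast1 : ((r : ℝ) - i) = (s : ℝ) := hscast.symm
        have hcast2 : ((r : ℝ) - ((i : ℝ) + 1)) = (s : ℝ) - 1 := by
          rw [← hcast1]; ring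
        have hnat : r.choose (i + 1) * (i + 1) = r.choose i * s := by
          rw [hs_def]
          exact Nat.choose_succ_right_eq r i
        have hnatR : (r.choose (i + 1) : ℝ) * (i + 1) = (r.choose i : ℝ) * s := by
          exact_mod_cast hnat
        have hi1 : (0 : ℝ) ≤ (i : ℝ) := Nat.cast_nonneg i
        have hspos : (0 : ℝ) < s := by positivity
        have he : (0 : ℝ) < Real.exp 1 := Real.exp_pos 1
        have hsm : (s : ℝ) * ((s : ℝ) - 1) ^ m ≤ (s : ℝ) ^ m := by
          calc (s : ℝ) * ((s : ℝ) - 1) ^ m ≤ (s : ℝ) ^ m / Real.exp 1 := hkey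
            _ ≤ (s : ℝ) ^ m := div_le_self (pow_nonneg (le_of_lt hspos) m)
                (by linarith [Real.add_one_le_exp (1 : ℝ)])
        -- f (i+1) * (i+1) ≤ f i * (i+1)
        have hstep : f (i + 1) * ((i : ℝ) + 1) ≤ f i * ((i : ℝ) + 1) := by
          have lhs_eq : f (i + 1) * ((i : ℝ) + 1) = (r.choose i : ℝ) * ((s : ℝ) * ((s : ℝ) - 1) ^ m) := by
            simp only [hf_def]
            push_cast
            rw [hcast2]
            linear_combination ((s : ℝ) - 1) ^ m * hnatR
          have rhs_eq : f i * ((i : ℝ) + 1) = (r.choose i : ℝ) * (s : ℝ) ^ m * ((i : ℝ) + 1) := by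
            simp only [hf_def]; rw [hcast1]
          rw [lhs_eq, rhs_eq]
          have hc0 : (0 : ℝ) ≤ (r.choose i : ℝ) := by positivity
          have h1 : (r.choose i : ℝ) * ((s : ℝ) * ((s : ℝ) - 1) ^ m) ≤ (r.choose i : ℝ) * (s : ℝ) ^ m :=
            mul_le_mul_of_nonneg_left hsm hc0
          have h2 : (r.choose i : ℝ) * (s : ℝ) ^ m ≤ (r.choose i : ℝ) * (s : ℝ) ^ m * ((i : ℝ) + 1) := by
            have hnn : (0 : ℝ) ≤ (r.choose i : ℝ) * (s : ℝ) ^ m * (i : ℝ) :=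
              mul_nonneg (mul_nonneg hc0 (pow_nonneg (le_of_lt hspos) m)) hi1
            nlinarith [hnn]
          linarith
        have hipos : (0 : ℝ) < (i : ℝ) + 1 := by positivity
        exact le_of_mul_le_mul_right hstep hipos
      · -- i + 1 = r
        have hir : i + 1 = r := by omega
        have : f (i + 1) = 0 := by
          simp only [hf_def]
          rw [hir]
          have : ((r : ℝ) - r) = 0 := by ring
          rw [this, zero_pow (by omega)]
          ring
        rw [this]; exact hf0 i
    · -- r ≤ i, so choose r (i+1) = 0
      have : f (i + 1) = 0 := by
        simp [hf_def, Nat.choose_eq_zero_of_lt (by omega : r < i + 1)]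
      rw [this]; exact hf0 i
  -- lower bound on the alternating sum
  have hA : altA m r = ∑ i ∈ Finset.range (r + 1), (-1 : ℝ) ^ i * f i := by
    unfold altA
    apply Finset.sum_congr rfl
    intro i _
    simp only [hf_def]
    ring
  obtain ⟨n, hn⟩ : ∃ n, r = n + 1 := ⟨r - 1, by omega⟩
  have hlb : f 0 - f 1 ≤ altA m r := by
    rw [hA, hn]
    exact altSum_lb (n + 1) f hf0 hfdec
  have hf0val : f 0 = (r : ℝ) ^ m := by simp [hf_def]
  have hf1val : f 1 = (r : ℝ) * ((r : ℝ) - 1) ^ m := by simp [hf_def]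
  have hf1le : f 1 ≤ (r : ℝ) ^ m / Real.exp 1 := by
    rw [hf1val]; exact key_exp m r hr hm
  have hT : (r.factorial : ℝ) * stirling m r ≥ (r : ℝ) ^ m - (r : ℝ) ^ m / Real.exp 1 := by
    rw [factorial_mul_stirling m r]
    calc (r:ℝ)^m - (r:ℝ)^m / Real.exp 1 ≤ f 0 - f 1 := by rw [hf0val]; linarith
      _ ≤ altA m r := hlb
  -- final assembly
  have hfac : (r.factorial : ℝ) ≤ 2 * (r : ℝ) ^ (r - 2) := by
    have := factorial_le r hr
    exact_mod_cast this
  have hpow_split : (r : ℝ) ^ (m - r + 2) * (r : ℝ) ^ (r - 2) = (r : ℝ) ^ m := by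
    rw [← pow_add]
    congr 1
    omega
  have hfacpos : (0 : ℝ) < (r.factorial : ℝ) := by positivity
  have he : (0 : ℝ) < Real.exp 1 := Real.exp_pos 1
  have he2 : (2 : ℝ) < Real.exp 1 := by
    have := Real.exp_one_gt_d9
    norm_num at this
    linarith
  have hrm_pos : (0 : ℝ) < (r : ℝ) ^ m := by positivity
  -- show r! * (1/4 * r^(m-r+2)) < r! * stirling
  have hmain : (r.factorial : ℝ) * ((1 / 4) * (r : ℝ) ^ (m - r + 2))
      < (r.factorial : ℝ) * (stirling m r : ℝ) := by
    have h1 : (r.factorial : ℝ) * ((1 / 4) * (r : ℝ) ^ (m - r + 2))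
        ≤ 2 * (r : ℝ) ^ (r - 2) * ((1 / 4) * (r : ℝ) ^ (m - r + 2)) := by
      have hnn : (0 : ℝ) ≤ (1 / 4) * (r : ℝ) ^ (m - r + 2) := by positivity
      nlinarith [hfac, hnn]
    have h2 : 2 * (r : ℝ) ^ (r - 2) * ((1 / 4) * (r : ℝ) ^ (m - r + 2)) = (1 / 2) * (r : ℝ) ^ m := by
      rw [← hpow_split]; ring
    have h3 : (1 / 2) * (r : ℝ) ^ m < (r : ℝ) ^ m - (r : ℝ) ^ m / Real.exp 1 := by
      have : (r : ℝ) ^ m / Real.exp 1 < (1 / 2) * (r : ℝ) ^ m := by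
        rw [div_lt_iff₀ he]
        nlinarith [he2, hrm_pos]
      linarith
    calc (r.factorial : ℝ) * ((1 / 4) * (r : ℝ) ^ (m - r + 2))
        ≤ (1 / 2) * (r : ℝ) ^ m := by rw [← h2]; exact h1
      _ < (r : ℝ) ^ m - (r : ℝ) ^ m / Real.exp 1 := h3
      _ ≤ (r.factorial : ℝ) * stirling m r := hT
  exact lt_of_mul_lt_mul_left hmain (le_of_lt hfacpos)
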